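/- Fix integers N ≥ 2 and k ≥ 1, and let A = {0,1,…,N−1}. Consider the real vector space of all functions P defined on the set of nonempty words over A of length at most k that satisfy the homogeneous consistency conditions P(b) = Σ_{a∈A} P(ba) = Σ_{a∈A} P(ab) for every nonempty word b of length strictly less than k. This vector space has dimension (N−1)·N^{k−1} + 1. Consequently, for block probabilities additionally normalized by Σ_{a∈A} P(a) = 1, exactly (N−1)·N^{k−1} of the block probabilities of lengths 1 through k are linearly independent. -/

import Mathlib

/-- Nonempty words over the alphabet `Fin N` of length at most `k`. -/
def ShortWords (N k : ℕ) : Type := {l : List (Fin N) // l ≠ [] ∧ l.length ≤ k}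

/-- The vector space of real-valued functions on nonempty words of length at most `k`
satisfying the homogeneous consistency conditions
`P b = ∑ a, P (b ++ [a]) = ∑ a, P (a :: b)` for every nonempty word `b` of length `< k`. -/
def consistentSpace (N k : ℕ) : Submodule ℝ (ShortWords N k → ℝ) where
  carrier := {P | ∀ (b : List (Fin N)) (hb : b ≠ []) (hlen : b.length < k),
      P ⟨b, hb, hlen.le⟩ = ∑ a : Fin N, P ⟨b ++ [a], by simp, by simpa using hlen⟩ ∧
      P ⟨b, hb, hlen.le⟩ = ∑ a : Fin N, P ⟨a :: b, by simp, by simpa using hlen⟩}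
  add_mem' := by
    intro P Q hP hQ b hb hlen
    exact ⟨(congrArg₂ (· + ·) (hP b hb hlen).1 (hQ b hb hlen).1).trans Finset.sum_add_distrib.symm,
      (congrArg₂ (· + ·) (hP b hb hlen).2 (hQ b hb hlen).2).trans Finset.sum_add_distrib.symm⟩
  zero_mem' := by
    intro b hb hlen
    exact ⟨Finset.sum_const_zero.symm, Finset.sum_const_zero.symm⟩
  smul_mem' := by
    intro c P hP b hb hlen
    exact ⟨(congrArg (HMul.hMul c) (hP b hb hlen).1).trans (Finset.mul_sum _ _ _),
      (congrArg (HMul.hMul c) (hP b hb hlen).2).trans (Finset.mul_sum _ _ _)⟩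

namespace BlockAux

open Finset Module

/-- Words of length exactly `n`. -/
abbrev Vec (N n : ℕ) := List.Vector (Fin N) n

lemma vec_ne_nil {N n : ℕ} (v : Vec N (n + 1)) : v.1 ≠ [] := by
  intro h
  have h2 := v.2
  rw [h] at h2
  simp at h2

instance instUniqueVec0 (N : ℕ) : Unique (Vec N 0) :=
  ⟨⟨⟨[], rfl⟩⟩, fun v => Subtype.ext (List.eq_nil_of_length_eq_zero v.2)⟩

@[simp] lemma vec_default_val (N : ℕ) : (default : Vec N 0).1 = [] := rfl

def consEquiv (N n : ℕ) : Fin N × Vec N n ≃ Vec N (n + 1) where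
  toFun p := ⟨p.1 :: p.2.1, by simp [p.2.2]⟩
  invFun v := (v.1.head (vec_ne_nil v), ⟨v.1.tail, by simp [v.2]⟩)
  left_inv p := rfl
  right_inv v := Subtype.ext (List.cons_head_tail (vec_ne_nil v))

def snocEquiv (N n : ℕ) : Vec N n × Fin N ≃ Vec N (n + 1) where
  toFun p := ⟨p.1.1 ++ [p.2], by simp [p.1.2]⟩
  invFun v := (⟨v.1.dropLast, by simp [v.2]⟩, v.1.getLast (vec_ne_nil v))
  left_inv p := by
    refine Prod.ext (Subtype.ext ?_) ?_
    · simp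
    · simp [List.getLast_concat]
  right_inv v := Subtype.ext (List.dropLast_append_getLast (vec_ne_nil v))

lemma sum_cons {N n : ℕ} (g : Vec N (n + 1) → ℝ) :
    ∑ v : Vec N (n + 1), g v
      = ∑ a : Fin N, ∑ w : Vec N n, g ⟨a :: w.1, by simp [w.2]⟩ := by
  rw [← Equiv.sum_comp (consEquiv N n) g, Fintype.sum_prod_type]
  rfl

lemma sum_snoc {N n : ℕ} (g : Vec N (n + 1) → ℝ) :
    ∑ v : Vec N (n + 1), g v
      = ∑ w : Vec N n, ∑ a : Fin N, g ⟨w.1 ++ [a], by simp [w.2]⟩ := by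
  rw [← Equiv.sum_comp (snocEquiv N n) g, Fintype.sum_prod_type]
  rfl

lemma sum_cast {N d e : ℕ} (h : d = e) (g : Vec N d → ℝ) :
    ∑ v : Vec N d, g v = ∑ w : Vec N e, g ⟨w.1, by rw [w.2, h]⟩ := by
  subst h; rfl

lemma sum_cons' {N d e : ℕ} (h : d = e + 1) (g : Vec N d → ℝ) :
    ∑ v : Vec N d, g v
      = ∑ a : Fin N, ∑ w : Vec N e, g ⟨a :: w.1, by simp [w.2, h]⟩ := by
  subst h; exact sum_cons g

lemma sum_snoc' {N d e : ℕ} (h : d = e + 1) (g : Vec N d → ℝ) :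
    ∑ v : Vec N d, g v
      = ∑ w : Vec N e, ∑ a : Fin N, g ⟨w.1 ++ [a], by simp [w.2, h]⟩ := by
  subst h; exact sum_snoc g

/-- The "consistency defect" map on level-`(m+1)` functions. -/
def Tmap (N m : ℕ) : (Vec N (m + 1) → ℝ) →ₗ[ℝ] (Vec N m → ℝ) where
  toFun Q := fun c => (∑ a : Fin N, Q ⟨c.1 ++ [a], by simp [c.2]⟩)
      - ∑ a : Fin N, Q ⟨a :: c.1, by simp [c.2]⟩
  map_add' Q R := by
    funext c
    simp only [Pi.add_def, Pi.add_apply, Finset.sum_add_distrib]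
    ring
  map_smul' r Q := by
    funext c
    simp only [Pi.smul_def, Pi.smul_apply, smul_eq_mul, RingHom.id_apply, ← Finset.mul_sum]
    ring

lemma ker_Tmap_eq {N m : ℕ} {Q : Vec N (m + 1) → ℝ} (hQ : Tmap N m Q = 0) (c : Vec N m) :
    ∑ a : Fin N, Q ⟨c.1 ++ [a], by simp [c.2]⟩ = ∑ a : Fin N, Q ⟨a :: c.1, by simp [c.2]⟩ := by
  have h := congrFun hQ c
  simp only [Pi.zero_apply] at h
  exact sub_eq_zero.mp h

lemma mem_consistentSpace {N k : ℕ} {P : ShortWords N k → ℝ} :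
    P ∈ consistentSpace N k ↔ ∀ (b : List (Fin N)) (hb : b ≠ []) (hlen : b.length < k),
      P ⟨b, hb, hlen.le⟩ = (∑ a : Fin N, P ⟨b ++ [a], by simp, by simpa using hlen⟩) ∧
      P ⟨b, hb, hlen.le⟩ = ∑ a : Fin N, P ⟨a :: b, by simp, by simpa using hlen⟩ :=
  Iff.rfl

lemma sum_ext {N k : ℕ} {P : ShortWords N k → ℝ} (hP : P ∈ consistentSpace N k) :
    ∀ (d : ℕ) (b : List (Fin N)) (hb : b ≠ []) (hlen : b.length + d = k),
      P ⟨b, hb, by omega⟩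
        = ∑ w : Vec N d, P ⟨b ++ w.1, by simp [hb], by simp [w.2]; omega⟩ := by
  intro d
  induction d with
  | zero =>
    intro b hb hlen
    rw [Fintype.sum_unique]
    exact congrArg P (Subtype.ext (by simp))
  | succ d ih =>
    intro b hb hlen
    have h1 := (mem_consistentSpace.mp hP b hb (by omega)).1
    rw [h1, sum_cons]
    refine Finset.sum_congr rfl fun a _ => ?_
    rw [ih (b ++ [a]) (by simp) (by simp; omega)]
    refine Finset.sum_congr rfl fun w _ => ?_
    exact congrArg P (Subtype.ext (by simp))

/-- Restriction of a consistent system to words of maximal length. -/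
def rmap (N m : ℕ) : consistentSpace N (m + 1) →ₗ[ℝ] (Vec N (m + 1) → ℝ) where
  toFun P := fun w => P.1 ⟨w.1, vec_ne_nil w, le_of_eq w.2⟩
  map_add' P Q := rfl
  map_smul' c P := rfl

lemma rmap_inj (N m : ℕ) : LinearMap.ker (rmap N m) = ⊥ := by
  rw [LinearMap.ker_eq_bot']
  intro P hP
  apply Subtype.ext
  funext b
  obtain ⟨b, hb, hlen⟩ := b
  simp only [ZeroMemClass.coe_zero, Pi.zero_apply]
  rw [sum_ext P.2 (m + 1 - b.length) b hb (by omega)]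
  refine Finset.sum_eq_zero fun w _ => ?_
  exact congrFun hP ⟨b ++ w.1, by simp [w.2]; omega⟩

lemma right_cond {N m : ℕ} (Q : Vec N (m + 1) → ℝ) (b : List (Fin N))
    (hlen : b.length < m + 1) :
    (∑ w : Vec N (m + 1 - b.length), Q ⟨b ++ w.1, by simp [w.2]; omega⟩)
      = ∑ a : Fin N, ∑ w : Vec N (m + 1 - (b ++ [a]).length),
          Q ⟨(b ++ [a]) ++ w.1, by simp [w.2]; omega⟩ := by
  calc (∑ w : Vec N (m + 1 - b.length), Q ⟨b ++ w.1, by simp [w.2]; omega⟩)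
      = ∑ a : Fin N, ∑ w : Vec N (m - b.length), Q ⟨b ++ (a :: w.1), by simp [w.2]; omega⟩ := by
        rw [sum_cons' (show m + 1 - b.length = (m - b.length) + 1 by omega)]
    _ = ∑ a : Fin N, ∑ w : Vec N (m + 1 - (b ++ [a]).length),
          Q ⟨(b ++ [a]) ++ w.1, by simp [w.2]; omega⟩ := by
        refine Finset.sum_congr rfl fun a _ => ?_
        rw [sum_cast (show m + 1 - (b ++ [a]).length = m - b.length by simp)]
        exact Finset.sum_congr rfl fun w _ => congrArg Q (Subtype.ext (by simp))

lemma left_cond {N m : ℕ} (Q : Vec N (m + 1) → ℝ) (hQ : Tmap N m Q = 0) (b : List (Fin N))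
    (hlen : b.length < m + 1) :
    (∑ w : Vec N (m + 1 - b.length), Q ⟨b ++ w.1, by simp [w.2]; omega⟩)
      = ∑ a : Fin N, ∑ w : Vec N (m + 1 - (a :: b).length),
          Q ⟨(a :: b) ++ w.1, by simp [w.2]; omega⟩ := by
  calc (∑ w : Vec N (m + 1 - b.length), Q ⟨b ++ w.1, by simp [w.2]; omega⟩)
      = ∑ w : Vec N (m - b.length), ∑ a : Fin N,
          Q ⟨(b ++ w.1) ++ [a], by simp [w.2]; omega⟩ := by
        rw [sum_snoc' (show m + 1 - b.length = (m - b.length) + 1 by omega)]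
        exact Finset.sum_congr rfl fun w _ => Finset.sum_congr rfl fun a _ =>
          congrArg Q (Subtype.ext (by simp))
    _ = ∑ w : Vec N (m - b.length), ∑ a : Fin N,
          Q ⟨a :: (b ++ w.1), by simp [w.2]; omega⟩ :=
        Finset.sum_congr rfl fun w _ => ker_Tmap_eq hQ ⟨b ++ w.1, by simp [w.2]; omega⟩
    _ = ∑ a : Fin N, ∑ w : Vec N (m - b.length),
          Q ⟨a :: (b ++ w.1), by simp [w.2]; omega⟩ := Finset.sum_comm
    _ = ∑ a : Fin N, ∑ w : Vec N (m + 1 - (a :: b).length),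
          Q ⟨(a :: b) ++ w.1, by simp [w.2]; omega⟩ := by
        refine Finset.sum_congr rfl fun a _ => ?_
        rw [sum_cast (show m + 1 - (a :: b).length = m - b.length by
          simp only [List.length_cons]; omega)]
        exact Finset.sum_congr rfl fun w _ => rfl

lemma full_len {N m : ℕ} (Q : Vec N (m + 1) → ℝ) (v : Vec N (m + 1)) :
    (∑ w : Vec N (m + 1 - v.1.length), Q ⟨v.1 ++ w.1, by simp [w.2, v.2]⟩) = Q v := by
  rw [sum_cast (show m + 1 - v.1.length = 0 by simp [v.2]), Fintype.sum_unique]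
  exact congrArg Q (Subtype.ext (by simp))

lemma range_rmap (N m : ℕ) : LinearMap.range (rmap N m) = LinearMap.ker (Tmap N m) := by
  apply le_antisymm
  · rintro _ ⟨P, rfl⟩
    rw [LinearMap.mem_ker]
    funext c
    simp only [Tmap, rmap, LinearMap.coe_mk, AddHom.coe_mk, Pi.zero_apply]
    rw [sub_eq_zero]
    by_cases hc : c.1 = []
    · exact Finset.sum_congr rfl fun a _ => congrArg _ (Subtype.ext (by simp [hc]))
    · have h1 := (mem_consistentSpace.mp P.2 c.1 hc (by rw [c.2]; omega)).1
      have h2 := (mem_consistentSpace.mp P.2 c.1 hc (by rw [c.2]; omega)).2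
      rw [← h1, ← h2]
  · intro Q hQ
    rw [LinearMap.mem_ker] at hQ
    refine ⟨⟨fun b => ∑ w : Vec N (m + 1 - b.1.length),
        Q ⟨b.1 ++ w.1, by simp [w.2]; have := b.2.2; omega⟩, ?_⟩, ?_⟩
    · rw [mem_consistentSpace]
      intro b hb hlen
      exact ⟨right_cond Q b hlen, left_cond Q hQ b hlen⟩
    · funext v
      exact full_len Q v

/-- Summation functional. -/
def sumF (N m : ℕ) : (Vec N m → ℝ) →ₗ[ℝ] ℝ where
  toFun f := ∑ c : Vec N m, f c
  map_add' f g := by simp [Finset.sum_add_distrib]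
  map_smul' r f := by simp [Finset.mul_sum]

/-- The de Bruijn shift-averaging operator. -/
def sigma (N p : ℕ) : Module.End ℝ (Vec N (p + 1) → ℝ) where
  toFun u := fun c => ∑ a : Fin N, u ⟨a :: c.1.dropLast, by simp [c.2]⟩
  map_add' u v := by funext c; simp [Pi.add_def, Finset.sum_add_distrib]
  map_smul' r u := by funext c; simp [Pi.smul_def, Finset.mul_sum]

lemma dropLast_take' {α : Type*} (l : List α) (n : ℕ) (hn : n ≤ l.length) :
    (l.take n).dropLast = l.take (n - 1) := by
  rcases Nat.lt_or_ge n l.length with h | h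
  · exact List.dropLast_take h
  · have hnl : n = l.length := le_antisymm hn h
    subst hnl
    rw [List.take_of_length_le le_rfl, List.dropLast_eq_take]

lemma sigma_pow (N p : ℕ) (j : ℕ) :
    ∀ (_ : j ≤ p + 1) (u : Vec N (p + 1) → ℝ) (c : Vec N (p + 1)),
      ((sigma N p) ^ j) u c
        = ∑ w : Vec N j, u ⟨w.1 ++ c.1.take (p + 1 - j), by simp [w.2, c.2]; omega⟩ := by
  induction j with
  | zero =>
    intro hj u c
    rw [pow_zero, Module.End.one_apply, Fintype.sum_unique]
    refine congrArg u (Subtype.ext ?_)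
    simp [List.take_of_length_le (le_of_eq c.2)]
  | succ j ih =>
    intro hj u c
    rw [pow_succ, Module.End.mul_apply, ih (by omega) (sigma N p u) c]
    rw [sum_cons (fun w : Vec N (j + 1) =>
      u ⟨w.1 ++ c.1.take (p + 1 - (j + 1)), by simp [w.2, c.2]; omega⟩)]
    rw [Finset.sum_comm]
    refine Finset.sum_congr rfl fun w _ => ?_
    show ∑ a : Fin N, u ⟨a :: (w.1 ++ c.1.take (p + 1 - j)).dropLast, _⟩ = _
    refine Finset.sum_congr rfl fun a _ => congrArg u (Subtype.ext ?_)
    show a :: (w.1 ++ c.1.take (p + 1 - j)).dropLast = a :: (w.1 ++ c.1.take (p + 1 - (j + 1)))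
    have htk : c.1.take (p + 1 - j) ≠ [] := by
      have : (c.1.take (p + 1 - j)).length = p + 1 - j := by
        rw [List.length_take, c.2]; omega
      intro hcon; rw [hcon] at this; simp at this; omega
    rw [List.dropLast_append_of_ne_nil htk, dropLast_take' _ _ (by rw [c.2]; omega)]
    rfl

lemma sigma_top {N p : ℕ} (u : Vec N (p + 1) → ℝ) (hu : sumF N (p + 1) u = 0) :
    ((sigma N p) ^ (p + 1)) u = 0 := by
  funext c
  rw [sigma_pow N p (p + 1) le_rfl u c]
  simp only [Pi.zero_apply]
  calc (∑ w : Vec N (p + 1), u ⟨w.1 ++ c.1.take (p + 1 - (p + 1)), by simp [w.2, c.2]⟩)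
      = ∑ w : Vec N (p + 1), u w :=
        Finset.sum_congr rfl fun w _ => congrArg u (Subtype.ext (by simp))
    _ = 0 := hu

lemma surj_aux (N p : ℕ) (hN : 2 ≤ N) (f : Vec N (p + 1) → ℝ)
    (hf : sumF N (p + 1) f = 0) : ∃ Q : Vec N (p + 1 + 1) → ℝ, Tmap N (p + 1) Q = f := by
  have hNne : (N : ℝ) ≠ 0 := Nat.cast_ne_zero.mpr (by omega)
  set τ : Module.End ℝ (Vec N (p + 1) → ℝ) := (N : ℝ)⁻¹ • sigma N p with hτ
  set g : Vec N (p + 1) → ℝ := (N : ℝ)⁻¹ • f with hg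
  have hg0 : sumF N (p + 1) g = 0 := by rw [hg, map_smul, hf, smul_zero]
  have hτtop : (τ ^ (p + 1)) g = 0 := by
    rw [hτ, smul_pow, LinearMap.smul_apply, sigma_top g hg0, smul_zero]
  have hgeom : ((1 : Module.End ℝ (Vec N (p + 1) → ℝ)) - τ) * (∑ i ∈ Finset.range (p + 1), τ ^ i)
      = 1 - τ ^ (p + 1) := by
    have hcomm : Commute ((1 : Module.End ℝ (Vec N (p + 1) → ℝ)) - τ)
        (∑ i ∈ Finset.range (p + 1), τ ^ i) :=
      Commute.sum_right _ _ _ fun i _ =>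
        ((Commute.one_left (τ ^ i)).sub_left ((Commute.refl τ).pow_right i))
    rw [hcomm.eq]
    have h := geom_sum_mul τ (p + 1)
    have h2 : (∑ i ∈ Finset.range (p + 1), τ ^ i) * (1 - τ)
        = -((∑ i ∈ Finset.range (p + 1), τ ^ i) * (τ - 1)) := by
      simp only [mul_sub, mul_one, neg_sub]
    rw [h2, h, neg_sub]
  set u : Vec N (p + 1) → ℝ := (∑ i ∈ Finset.range (p + 1), τ ^ i) g with hu
  have hkey : u - τ u = g := by
    have h3 : ((1 : Module.End ℝ (Vec N (p + 1) → ℝ)) - τ) u = u - τ u := by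
      rw [LinearMap.sub_apply, Module.End.one_apply]
    rw [← h3, hu, ← Module.End.mul_apply, hgeom, LinearMap.sub_apply, Module.End.one_apply,
      hτtop, sub_zero]
  have hu2 : (N : ℝ) • u - sigma N p u = f := by
    have h4 := congrArg (fun x => (N : ℝ) • x) hkey
    simp only [smul_sub] at h4
    rw [hτ] at h4
    rw [LinearMap.smul_apply] at h4
    rw [smul_inv_smul₀ hNne] at h4
    rw [hg, smul_inv_smul₀ hNne] at h4
    exact h4
  refine ⟨fun v => u ⟨v.1.dropLast, by simp [v.2]⟩, ?_⟩
  have hTQ : Tmap N (p + 1) (fun v : Vec N (p + 1 + 1) => u ⟨v.1.dropLast, by simp [v.2]⟩)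
      = fun c => (N : ℝ) • u c - sigma N p u c := by
    funext c
    simp only [Tmap, LinearMap.coe_mk, AddHom.coe_mk]
    congr 1
    · calc (∑ a : Fin N, u ⟨(c.1 ++ [a]).dropLast, by simp [c.2]⟩)
          = ∑ _a : Fin N, u c :=
            Finset.sum_congr rfl fun a _ => congrArg u (Subtype.ext (by simp))
        _ = (N : ℝ) • u c := by
            rw [Finset.sum_const, Finset.card_univ, Fintype.card_fin, nsmul_eq_mul]
            simp [smul_eq_mul]
    · calc (∑ a : Fin N, u ⟨(a :: c.1).dropLast, by simp [c.2]⟩)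
          = ∑ a : Fin N, u ⟨a :: c.1.dropLast, by simp [c.2]⟩ :=
            Finset.sum_congr rfl fun a _ => congrArg u (Subtype.ext (by
              simpa using List.dropLast_append_of_ne_nil (l := c.1) (l' := [a]) (vec_ne_nil c)))
        _ = sigma N p u c := rfl
  rw [hTQ]
  funext c
  exact congrFun hu2 c

lemma range_Tmap (N m : ℕ) (hN : 2 ≤ N) :
    LinearMap.range (Tmap N m) = LinearMap.ker (sumF N m) := by
  apply le_antisymm
  · rintro _ ⟨Q, rfl⟩
    rw [LinearMap.mem_ker]
    show (∑ c : Vec N m, Tmap N m Q c) = 0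
    calc (∑ c : Vec N m, Tmap N m Q c)
        = (∑ c : Vec N m, ∑ a : Fin N, Q ⟨c.1 ++ [a], by simp [c.2]⟩)
            - ∑ c : Vec N m, ∑ a : Fin N, Q ⟨a :: c.1, by simp [c.2]⟩ := by
          rw [← Finset.sum_sub_distrib]
          exact Finset.sum_congr rfl fun c _ => rfl
      _ = (∑ v : Vec N (m + 1), Q v) - ∑ v : Vec N (m + 1), Q v := by
          congr 1
          · exact (sum_snoc Q).symm
          · rw [sum_cons Q]
            exact Finset.sum_comm
      _ = 0 := sub_self _
  · intro f hf
    rw [LinearMap.mem_ker] at hf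
    rcases m with _ | p
    · have hf0 : f = 0 := by
        funext c
        have h1 : (∑ x : Vec N 0, f x) = 0 := hf
        rw [Fintype.sum_unique] at h1
        rw [Unique.eq_default c]
        simpa using h1
      rw [hf0]
      exact zero_mem _
    · obtain ⟨Q, hQ⟩ := surj_aux N p hN f hf
      exact ⟨Q, hQ⟩

lemma finrank_fun_vec (N m : ℕ) : finrank ℝ (Vec N m → ℝ) = N ^ m := by
  rw [Module.finrank_pi ℝ, card_vector, Fintype.card_fin]

lemma finrank_ker_sumF (N m : ℕ) (hN : 2 ≤ N) :
    finrank ℝ (LinearMap.ker (sumF N m)) = N ^ m - 1 := by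
  have hrn := (sumF N m).finrank_range_add_finrank_ker
  have hrange : LinearMap.range (sumF N m) = ⊤ := by
    rw [LinearMap.range_eq_top]
    intro r
    have hcard : (Fintype.card (Vec N m) : ℝ) ≠ 0 := by
      rw [card_vector, Fintype.card_fin]
      push_cast
      exact pow_ne_zero _ (Nat.cast_ne_zero.mpr (by omega))
    refine ⟨fun _ => r / (Fintype.card (Vec N m) : ℝ), ?_⟩
    show (∑ _c : Vec N m, r / (Fintype.card (Vec N m) : ℝ)) = r
    rw [Finset.sum_const, Finset.card_univ, nsmul_eq_mul]
    field_simp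
  rw [hrange] at hrn
  rw [finrank_top, Module.finrank_self] at hrn
  rw [finrank_fun_vec] at hrn
  omega

end BlockAux

/-- the space of consistent systems of block probabilities of lengths `≤ k`
has dimension `(N-1)·N^(k-1) + 1`; hence, after normalization, exactly `(N-1)·N^(k-1)`
block probabilities are linearly independent. -/
theorem finrank_consistentSpace (N k : ℕ) (hN : 2 ≤ N) (hk : 1 ≤ k) :
    Module.finrank ℝ (consistentSpace N k) = (N - 1) * N ^ (k - 1) + 1 := by
  open BlockAux in
  obtain ⟨m, rfl⟩ : ∃ m, k = m + 1 := ⟨k - 1, by omega⟩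
  have e1 : Module.finrank ℝ (consistentSpace N (m + 1))
      = Module.finrank ℝ (LinearMap.ker (Tmap N m)) := by
    rw [← range_rmap N m]
    exact (LinearEquiv.ofInjective (rmap N m)
      (LinearMap.ker_eq_bot.mp (rmap_inj N m))).finrank_eq
  have e2 := (Tmap N m).finrank_range_add_finrank_ker
  rw [range_Tmap N m hN, finrank_ker_sumF N m hN, finrank_fun_vec] at e2
  rw [e1]
  have hx : 1 ≤ N ^ m := Nat.one_le_pow m N (by omega)
  have hle : N ^ m ≤ N * N ^ m := Nat.le_mul_of_pos_left _ (by omega)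
  have e5 : (N - 1) * N ^ m = N * N ^ m - N ^ m := Nat.sub_one_mul N (N ^ m)
  have e6 : N ^ (m + 1) = N * N ^ m := by rw [pow_succ, Nat.mul_comm]
  rw [e6] at e2
  simp only [Nat.add_sub_cancel]
  rw [e5]
  generalize hA : N * N ^ m = A at e2 hle ⊢
  generalize hB : N ^ m = B at e2 hle hx ⊢
  omega
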